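/- With the notation of the rooted tree reduction: d metric on X, w ∈ X, M = max_x d(x,w), c_w(x,y) = 2M - d(x,w) - d(y,w), β_x = 2(M - d(x,w)); if d_{U'} is any ultrametric on X, then the clipped function d_U(x,y) := min(max(β_x, β_y, d_{U'}(x,y)), 2M) is again an ultrametric. -/
import Mathlib



/-- Clipping an ultrametric between `max(β_x,β_y)` and `2M` yields again an ultrametric. -/
theorem clip_is_ultrametric {X : Type*} [MetricSpace X] [DecidableEq X] (w : X) (M : ℝ)
    (hM : IsGreatest (Set.range fun x : X => dist x w) M)
    (dU' : X → X → ℝ)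
    (hsym : ∀ x y, dU' x y = dU' y x) (hdiag : ∀ x, dU' x x = 0)
    (hnn : ∀ x y, 0 ≤ dU' x y)
    (hult : ∀ x y z, dU' x y ≤ max (dU' x z) (dU' z y)) :
    let dU : X → X → ℝ := fun x y =>
      if x = y then 0 else
        min (max (max (2 * (M - dist x w)) (2 * (M - dist y w))) (dU' x y)) (2 * M)
    (∀ x y, dU x y = dU y x) ∧ (∀ x, dU x x = 0) ∧ (∀ x y, 0 ≤ dU x y) ∧
    (∀ x y z, dU x y ≤ max (dU x z) (dU z y)) := by
  intro dU
  have hub : ∀ x : X, dist x w ≤ M := fun x => hM.2 ⟨x, rfl⟩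
  have hM0 : (0:ℝ) ≤ M := le_trans dist_nonneg (hub w)
  have hβ : ∀ x : X, 0 ≤ 2 * (M - dist x w) := fun x => by
    have := hub x; linarith
  have hnn' : ∀ x y : X, 0 ≤ dU x y := by
    intro x y
    by_cases h : x = y
    · simp [dU, h]
    · simp only [dU, if_neg h]
      exact le_min (le_trans (hβ x) (le_max_of_le_left (le_max_left _ _))) (by linarith)
  refine ⟨?_, ?_, hnn', ?_⟩
  · intro x y
    by_cases h : x = y
    · simp [dU, h]
    · simp only [dU, if_neg h, if_neg (Ne.symm h), hsym x y,
        max_comm (2 * (M - dist x w))]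
  · intro x; simp [dU]
  · intro x y z
    by_cases hxy : x = y
    · have : dU x y = 0 := by simp [dU, hxy]
      rw [this]
      exact le_max_of_le_left (hnn' x z)
    by_cases hxz : x = z
    · subst hxz
      exact le_max_right _ _
    by_cases hzy : z = y
    · subst hzy
      exact le_max_left _ _
    simp only [dU, if_neg hxy, if_neg hxz, if_neg hzy]
    set A := max (max (2 * (M - dist x w)) (2 * (M - dist z w))) (dU' x z) with hA
    set B := max (max (2 * (M - dist z w)) (2 * (M - dist y w))) (dU' z y) with hB
    rcases le_total (2 * M) A with hA2 | hA2
    · have : min A (2 * M) = 2 * M := min_eq_right hA2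
      rw [this]
      exact le_max_of_le_left (min_le_right _ _)
    rcases le_total (2 * M) B with hB2 | hB2
    · have : min B (2 * M) = 2 * M := min_eq_right hB2
      rw [this]
      exact le_max_of_le_right (min_le_right _ _)
    rw [min_eq_left hA2, min_eq_left hB2]
    refine le_trans (min_le_left _ _) (max_le (max_le ?_ ?_) ?_)
    · exact le_max_of_le_left (le_trans (le_max_of_le_left (le_max_left _ _)) le_rfl)
    · exact le_max_of_le_right (le_max_of_le_left (le_max_right _ _))
    · exact le_trans (hult x y z)
        (max_le_max (le_max_right _ _) (le_max_right _ _))
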